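/- arXiv:1304.2534 — 2 statements merged into one kernel-verified Lean document; each statement's English description precedes it below -/
import Mathlib

section
/- For every λ ∈ ℂ there exists a unique ℂ-linear map d : U_λ → Ω¹ such that d(1) = 0, d(x₁) = −e₃ ⊗ 1, d(x₂) = e₁ ⊗ 1, d(x₃) = e₂ ⊗ 1, and d satisfies the Leibniz rule d(uv) = u·d(v) + d(u)·v for all u, v ∈ U_λ, where · denotes the left and right U_λ-actions on Ω¹. -/
noncomputable section
open TensorProduct

/-- The bracket of `g_λ` on coordinates: `[x₁,x₂] = 2λx₂`, `[x₁,x₃] = 2λx₃`, `[x₂,x₃] = 0`. -/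
def gbr (l : ℂ) (u v : Fin 3 → ℂ) : Fin 3 → ℂ :=
  ![0, 2 * l * (u 0 * v 1 - u 1 * v 0), 2 * l * (u 0 * v 2 - u 2 * v 0)]

lemma gbr_add_left (l : ℂ) (u v w : Fin 3 → ℂ) :
    gbr l (u + v) w = gbr l u w + gbr l v w := by
  funext i; fin_cases i <;> simp [gbr] <;> ring

lemma gbr_add_right (l : ℂ) (u v w : Fin 3 → ℂ) :
    gbr l u (v + w) = gbr l u v + gbr l u w := by
  funext i; fin_cases i <;> simp [gbr] <;> ring

lemma gbr_self (l : ℂ) (u : Fin 3 → ℂ) : gbr l u u = 0 := by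
  funext i; fin_cases i <;> simp [gbr] <;> ring_nf <;> tauto

lemma gbr_leibniz (l : ℂ) (u v w : Fin 3 → ℂ) :
    gbr l u (gbr l v w) = gbr l (gbr l u v) w + gbr l v (gbr l u w) := by
  funext i; fin_cases i <;> simp [gbr] <;> ring

lemma gbr_smul_right (l c : ℂ) (u v : Fin 3 → ℂ) :
    gbr l u (c • v) = c • gbr l u v := by
  funext i; fin_cases i <;> simp [gbr] <;> ring

/-- The underlying type of the Lie algebra `g_λ`. -/
def G (_l : ℂ) : Type := Fin 3 → ℂ

instance (l : ℂ) : AddCommGroup (G l) := inferInstanceAs (AddCommGroup (Fin 3 → ℂ))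
instance (l : ℂ) : Module ℂ (G l) := inferInstanceAs (Module ℂ (Fin 3 → ℂ))

instance (l : ℂ) : LieRing (G l) :=
  { (inferInstance : AddCommGroup (G l)) with
    bracket := fun u v => gbr l u v
    add_lie := fun u v w => gbr_add_left l u v w
    lie_add := fun u v w => gbr_add_right l u v w
    lie_self := fun u => gbr_self l u
    leibniz_lie := fun u v w => gbr_leibniz l u v w }

instance (l : ℂ) : LieAlgebra ℂ (G l) :=
  { lie_smul := fun c u v => gbr_smul_right l c u v }

attribute [local instance 100] LieRing.ofAssociativeRing

/-- The universal enveloping algebra `U_λ`. -/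
abbrev Uenv (l : ℂ) := UniversalEnvelopingAlgebra ℂ (G l)

/-- The canonical embedding `ι : g_λ → U_λ`. -/
def iotaU (l : ℂ) : G l →ₗ⁅ℂ⁆ Uenv l := UniversalEnvelopingAlgebra.ι ℂ

/-- The basis vector `x_a` of `g_λ` (0-indexed). -/
def xvec (l : ℂ) (a : Fin 3) : G l := (Pi.single a 1 : Fin 3 → ℂ)

/-- The generator `x_a` inside `U_λ`. -/
def Xgen (l : ℂ) (a : Fin 3) : Uenv l := iotaU l (xvec l a)

abbrev V3 := Fin 3 → ℂ

/-- `Ω¹ = ℂ³ ⊗ U_λ`. -/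
abbrev Om1 (l : ℂ) := V3 ⊗[ℂ] Uenv l

/-- The representation matrices `ρ(x₁) = λ diag(1,1,-1)`, `ρ(x₂) = λE₁₃`, `ρ(x₃) = λE₂₃`. -/
def rhoM (l : ℂ) : Fin 3 → Matrix (Fin 3) (Fin 3) ℂ :=
  ![l • Matrix.diagonal ![1, 1, -1],
    l • Matrix.single 0 2 1,
    l • Matrix.single 1 2 1]

/-- The representation `ρ` on a general element of `g_λ`. -/
def rhoLin (l : ℂ) (u : G l) : Matrix (Fin 3) (Fin 3) ℂ :=
  u 0 • rhoM l 0 + u 1 • rhoM l 1 + u 2 • rhoM l 2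

/-- Right action of `U_λ` on `Ω¹`: `(v ⊗ u)·w = v ⊗ (u*w)`. -/
def rAct (l : ℂ) (w : Uenv l) : Om1 l →ₗ[ℂ] Om1 l :=
  LinearMap.lTensor V3 (LinearMap.mulRight ℂ w)

/-- Left action of `x ∈ g_λ` on `Ω¹`: `x·(v ⊗ u) = ρ(x)v ⊗ u + v ⊗ (x*u)`. -/
def lActVec (l : ℂ) (x : G l) : Om1 l →ₗ[ℂ] Om1 l :=
  LinearMap.rTensor (Uenv l) (Matrix.toLin' (rhoLin l x)) +
    LinearMap.lTensor V3 (LinearMap.mulLeft ℂ (iotaU l x))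

/-- The invariant 1-forms: `dx₁ = -e₃`, `dx₂ = e₁`, `dx₃ = e₂` (as vectors in `ℂ³`). -/
def omegaV : Fin 3 → V3 :=
  ![-(Pi.single 2 1), Pi.single 0 1, Pi.single 1 1]

/-- The basic 1-forms `dx_a = ω_a ⊗ 1  ∈ Ω¹`. -/
def dx (l : ℂ) (a : Fin 3) : Om1 l := (omegaV a) ⊗ₜ[ℂ] (1 : Uenv l)


/-- Induction principle for the enveloping algebra. -/
lemma uenv_induction (l : ℂ) {p : Uenv l → Prop}
    (halg : ∀ c : ℂ, p (algebraMap ℂ (Uenv l) c))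
    (hι : ∀ x : G l, p (iotaU l x))
    (hmul : ∀ u v, p u → p v → p (u * v))
    (hadd : ∀ u v, p u → p v → p (u + v)) (u : Uenv l) : p u := by
  obtain ⟨t, rfl⟩ : ∃ t, UniversalEnvelopingAlgebra.mkAlgHom ℂ (G l) t = u :=
    RingCon.mkₐ_surjective (α := ℂ) _ u
  induction t using TensorAlgebra.induction with
  | algebraMap c => rw [AlgHom.commutes]; exact halg c
  | ι x => exact hι x
  | mul a b ha hb => rw [map_mul]; exact hmul _ _ ha hb
  | add a b ha hb => rw [map_add]; exact hadd _ _ ha hb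

lemma gdecomp (l : ℂ) (x : G l) :
    x = x 0 • xvec l 0 + x 1 • xvec l 1 + x 2 • xvec l 2 := by
  have : (x : V3) = x 0 • (Pi.single 0 1 : V3) + x 1 • (Pi.single 1 1 : V3) + x 2 • (Pi.single 2 1 : V3) := by
    funext i; fin_cases i <;> simp [Pi.single_apply]
  exact this

/-- `ω` as a linear combination. -/
def wl (x : V3) : V3 := x 0 • omegaV 0 + x 1 • omegaV 1 + x 2 • omegaV 2

def dxl (l : ℂ) : G l →ₗ[ℂ] Om1 l where
  toFun x := x 0 • dx l 0 + x 1 • dx l 1 + x 2 • dx l 2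
  map_add' x y := by
    change (x 0 + y 0) • dx l 0 + (x 1 + y 1) • dx l 1 + (x 2 + y 2) • dx l 2 = _
    module
  map_smul' c x := by
    change (c * x 0) • dx l 0 + (c * x 1) • dx l 1 + (c * x 2) • dx l 2 = _
    simp only [RingHom.id_apply]
    module

lemma dxl_apply (l : ℂ) (x : G l) :
    dxl l x = x 0 • dx l 0 + x 1 • dx l 1 + x 2 • dx l 2 := rfl

lemma dxl_eq (l : ℂ) (x : G l) : dxl l x = (wl x) ⊗ₜ[ℂ] (1 : Uenv l) := by
  rw [dxl_apply]
  simp [wl, dx, TensorProduct.add_tmul, TensorProduct.smul_tmul']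

lemma dxl_xvec (l : ℂ) (a : Fin 3) : dxl l (xvec l a) = dx l a := by
  fin_cases a <;>
    · rw [dxl_apply] ; simp [xvec, Pi.single_apply]

lemma rho_rep (l : ℂ) (x y : G l) :
    rhoLin l x * rhoLin l y - rhoLin l y * rhoLin l x = rhoLin l (gbr l x y) := by
  ext i j
  fin_cases i <;> fin_cases j <;>
    simp [rhoLin, rhoM, gbr, Matrix.mul_apply, Fin.sum_univ_three, Matrix.single,
      Matrix.diagonal] <;> ring

lemma core (l : ℂ) (x y : G l) :
    Matrix.toLin' (rhoLin l x) (wl y) - Matrix.toLin' (rhoLin l y) (wl x)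
      = wl (gbr l x y) := by
  funext i
  fin_cases i <;>
    simp [Matrix.toLin'_apply, Matrix.mulVec, dotProduct, Fin.sum_univ_three, rhoLin,
      rhoM, wl, omegaV, gbr, Matrix.single, Matrix.diagonal, Pi.single_apply] <;> ring
lemma rAct_one (l : ℂ) : rAct l 1 = LinearMap.id := by
  simp [rAct, LinearMap.mulRight_one, LinearMap.lTensor_id]

lemma rAct_mul (l : ℂ) (a b : Uenv l) : rAct l (a * b) = (rAct l b).comp (rAct l a) := by
  rw [rAct, LinearMap.mulRight_mul, LinearMap.lTensor_comp]; rfl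

lemma rAct_add (l : ℂ) (a b : Uenv l) : rAct l (a + b) = rAct l a + rAct l b := by
  have : LinearMap.mulRight ℂ (a + b) = LinearMap.mulRight ℂ a + LinearMap.mulRight ℂ b :=
    LinearMap.ext fun z => mul_add z a b
  rw [rAct, this, LinearMap.lTensor_add]; rfl

lemma rAct_smul (l : ℂ) (c : ℂ) (a : Uenv l) : rAct l (c • a) = c • rAct l a := by
  have : LinearMap.mulRight ℂ (c • a) = c • LinearMap.mulRight ℂ a :=
    LinearMap.ext fun z => mul_smul_comm c z a
  rw [rAct, this, LinearMap.lTensor_smul]; rfl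

lemma lAct_rAct_comm (l : ℂ) (x : G l) (w : Uenv l) :
    (lActVec l x).comp (rAct l w) = (rAct l w).comp (lActVec l x) := by
  have h1 : (LinearMap.mulLeft ℂ (iotaU l x)).comp (LinearMap.mulRight ℂ w)
      = (LinearMap.mulRight ℂ w).comp (LinearMap.mulLeft ℂ (iotaU l x)) :=
    LinearMap.ext fun z => by simp [mul_assoc]
  rw [lActVec, rAct, LinearMap.add_comp, LinearMap.comp_add,
    ← LinearMap.lTensor_comp, ← LinearMap.lTensor_comp, h1,
    LinearMap.rTensor_comp_lTensor, LinearMap.lTensor_comp_rTensor]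

lemma lAct_bracket (l : ℂ) (x y : G l) :
    (lActVec l x).comp (lActVec l y) - (lActVec l y).comp (lActVec l x)
      = lActVec l (gbr l x y) := by
  have hcrossxy := LinearMap.rTensor_comp_lTensor
    (f := Matrix.toLin' (rhoLin l x)) (g := LinearMap.mulLeft ℂ (iotaU l y))
  have hcrossxy' := LinearMap.lTensor_comp_rTensor
    (f := Matrix.toLin' (rhoLin l x)) (g := LinearMap.mulLeft ℂ (iotaU l y))
  have hcrossyx := LinearMap.rTensor_comp_lTensor
    (f := Matrix.toLin' (rhoLin l y)) (g := LinearMap.mulLeft ℂ (iotaU l x))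
  have hcrossyx' := LinearMap.lTensor_comp_rTensor
    (f := Matrix.toLin' (rhoLin l y)) (g := LinearMap.mulLeft ℂ (iotaU l x))
  have hA : (LinearMap.rTensor (Uenv l) (Matrix.toLin' (rhoLin l x))).comp
        (LinearMap.rTensor (Uenv l) (Matrix.toLin' (rhoLin l y)))
      - (LinearMap.rTensor (Uenv l) (Matrix.toLin' (rhoLin l y))).comp
        (LinearMap.rTensor (Uenv l) (Matrix.toLin' (rhoLin l x)))
      = LinearMap.rTensor (Uenv l) (Matrix.toLin' (rhoLin l (gbr l x y))) := by
    rw [← LinearMap.rTensor_comp, ← LinearMap.rTensor_comp, ← LinearMap.rTensor_sub,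
      ← Matrix.toLin'_mul, ← Matrix.toLin'_mul, ← map_sub, rho_rep]
  have hB : (LinearMap.lTensor V3 (LinearMap.mulLeft ℂ (iotaU l x))).comp
        (LinearMap.lTensor V3 (LinearMap.mulLeft ℂ (iotaU l y)))
      - (LinearMap.lTensor V3 (LinearMap.mulLeft ℂ (iotaU l y))).comp
        (LinearMap.lTensor V3 (LinearMap.mulLeft ℂ (iotaU l x)))
      = LinearMap.lTensor V3 (LinearMap.mulLeft ℂ (iotaU l (gbr l x y))) := by
    rw [← LinearMap.lTensor_comp, ← LinearMap.lTensor_comp, ← LinearMap.lTensor_sub,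
      ← LinearMap.mulLeft_mul, ← LinearMap.mulLeft_mul]
    congr 1
    have h2 : iotaU l (gbr l x y) = iotaU l x * iotaU l y - iotaU l y * iotaU l x := by
      have := (iotaU l).map_lie (x := x) (y := y)
      rw [LieRing.of_associative_ring_bracket] at this
      exact this
    rw [h2]
    exact LinearMap.ext fun z => by simp [sub_mul, mul_assoc]
  unfold lActVec
  rw [LinearMap.add_comp, LinearMap.comp_add, LinearMap.comp_add,
    LinearMap.add_comp, LinearMap.comp_add, LinearMap.comp_add,
    hcrossxy, hcrossyx, hcrossxy', hcrossyx', ← hA, ← hB]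
  abel
lemma rhoLin_add (l : ℂ) (x y : G l) : rhoLin l (x + y) = rhoLin l x + rhoLin l y := by
  show (x 0 + y 0) • rhoM l 0 + (x 1 + y 1) • rhoM l 1 + (x 2 + y 2) • rhoM l 2 = _
  ext i j
  simp [rhoLin, Matrix.add_apply, Matrix.smul_apply]
  ring

lemma rhoLin_smul (l c : ℂ) (x : G l) : rhoLin l (c • x) = c • rhoLin l x := by
  show (c * x 0) • rhoM l 0 + (c * x 1) • rhoM l 1 + (c * x 2) • rhoM l 2 = _
  ext i j
  simp [rhoLin, Matrix.add_apply, Matrix.smul_apply]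
  ring

lemma mulLeft_add' {l' : ℂ} (a b : Uenv l') : LinearMap.mulLeft ℂ (a + b)
    = LinearMap.mulLeft ℂ a + LinearMap.mulLeft ℂ b :=
  LinearMap.ext fun z => add_mul a b z

lemma mulLeft_smul' {l' : ℂ} (c : ℂ) (a : Uenv l') : LinearMap.mulLeft ℂ (c • a)
    = c • LinearMap.mulLeft ℂ a :=
  LinearMap.ext fun z => smul_mul_assoc c a z

lemma lActVec_add (l : ℂ) (x y : G l) :
    lActVec l (x + y) = lActVec l x + lActVec l y := by
  rw [lActVec, lActVec, lActVec, rhoLin_add, map_add, LinearMap.rTensor_add,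
    map_add (iotaU l), mulLeft_add', LinearMap.lTensor_add]
  abel

lemma lActVec_smul (l c : ℂ) (x : G l) :
    lActVec l (c • x) = c • lActVec l x := by
  rw [lActVec, lActVec, rhoLin_smul, map_smul, LinearMap.rTensor_smul,
    map_smul (iotaU l), mulLeft_smul', LinearMap.lTensor_smul, smul_add]

/-- The key cocycle identity for the values on generators. -/
lemma bracket_dxl (l : ℂ) (x y : G l) :
    lActVec l x (dxl l y) + rAct l (iotaU l y) (dxl l x)
      - (lActVec l y (dxl l x) + rAct l (iotaU l x) (dxl l y)) = dxl l (gbr l x y) := by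
  simp only [dxl_eq]
  have hx : ∀ (z w : G l), lActVec l z ((wl w) ⊗ₜ[ℂ] (1 : Uenv l))
      = (Matrix.toLin' (rhoLin l z) (wl w)) ⊗ₜ[ℂ] (1 : Uenv l)
        + (wl w) ⊗ₜ[ℂ] (iotaU l z) := by
    intro z w
    simp [lActVec, LinearMap.rTensor_tmul, LinearMap.lTensor_tmul]
  have hr : ∀ (z w : G l), rAct l (iotaU l z) ((wl w) ⊗ₜ[ℂ] (1 : Uenv l))
      = (wl w) ⊗ₜ[ℂ] (iotaU l z) := by
    intro z w
    simp [rAct, LinearMap.lTensor_tmul]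
  rw [hx, hx, hr, hr]
  simp only [dxl_eq l (gbr l x y), ← core l x y, TensorProduct.sub_tmul]
  abel
/-- `u ↦ ξ·u` as a linear map in `u`. -/
def rActL (l : ℂ) (ξ : Om1 l) : Uenv l →ₗ[ℂ] Om1 l where
  toFun u := rAct l u ξ
  map_add' u v := by show rAct l (u + v) ξ = _; rw [rAct_add]; rfl
  map_smul' c u := by show rAct l (c • u) ξ = _; rw [rAct_smul]; rfl

def fE (l : ℂ) (x : G l) : Module.End ℂ (Uenv l × Om1 l) :=
  (LinearMap.mulLeft ℂ (iotaU l x)).prodMap (lActVec l x) +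
    (LinearMap.inr ℂ (Uenv l) (Om1 l)).comp
      ((rActL l (dxl l x)).comp (LinearMap.fst ℂ (Uenv l) (Om1 l)))

lemma fE_apply (l : ℂ) (x : G l) (u : Uenv l) (m : Om1 l) :
    fE l x (u, m) = (iotaU l x * u, lActVec l x m + rAct l u (dxl l x)) := by
  simp [fE, rActL, Prod.ext_iff]

set_option maxHeartbeats 1000000 in
/-- The Lie algebra morphism `g → End(U × Ω¹)`. -/
def fLie (l : ℂ) : G l →ₗ⁅ℂ⁆ Module.End ℂ (Uenv l × Om1 l) where
  toFun := fE l
  map_add' x y := by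
    refine LinearMap.ext fun p => ?_
    obtain ⟨u, m⟩ := p
    rw [LinearMap.add_apply, fE_apply, fE_apply, fE_apply, Prod.mk_add_mk]
    refine Prod.ext ?_ ?_
    · show iotaU l (x + y) * u = _
      rw [map_add (iotaU l), add_mul]
    · show lActVec l (x + y) m + rAct l u (dxl l (x + y)) = _
      rw [lActVec_add, (dxl l).map_add, map_add, LinearMap.add_apply]
      abel
  map_smul' c x := by
    refine LinearMap.ext fun p => ?_
    obtain ⟨u, m⟩ := p
    simp only [RingHom.id_apply, LinearMap.smul_apply]
    rw [fE_apply, fE_apply, Prod.smul_mk]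
    refine Prod.ext ?_ ?_
    · show iotaU l (c • x) * u = _
      rw [map_smul (iotaU l), smul_mul_assoc]
    · show lActVec l (c • x) m + rAct l u (dxl l (c • x)) = _
      rw [lActVec_smul, (dxl l).map_smul, map_smul, LinearMap.smul_apply, smul_add]
  map_lie' := by
    intro x y
    refine LinearMap.ext fun p => ?_
    obtain ⟨u, m⟩ := p
    rw [Ring.lie_def, LinearMap.sub_apply, Module.End.mul_apply, Module.End.mul_apply]
    simp only [fE_apply]
    have hbr : (⁅x, y⁆ : G l) = gbr l x y := rfl
    rw [hbr, Prod.mk_sub_mk]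
    refine Prod.ext ?_ ?_
    · show iotaU l (gbr l x y) * u
          = iotaU l x * (iotaU l y * u) - iotaU l y * (iotaU l x * u)
      have h2 : iotaU l (gbr l x y) = iotaU l x * iotaU l y - iotaU l y * iotaU l x := by
        have := (iotaU l).map_lie (x := x) (y := y)
        rw [LieRing.of_associative_ring_bracket] at this
        exact this
      rw [h2, sub_mul, mul_assoc, mul_assoc]
    · show lActVec l (gbr l x y) m + rAct l u (dxl l (gbr l x y))
          = lActVec l x (lActVec l y m + rAct l u (dxl l y)) + rAct l (iotaU l y * u) (dxl l x)
          - (lActVec l y (lActVec l x m + rAct l u (dxl l x)) + rAct l (iotaU l x * u) (dxl l y))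
      rw [rAct_mul, rAct_mul, map_add, map_add]
      have c1 : lActVec l x (rAct l u (dxl l y)) = rAct l u (lActVec l x (dxl l y)) := by
        have := congrArg (fun f => f (dxl l y)) (lAct_rAct_comm l x u)
        simpa using this
      have c2 : lActVec l y (rAct l u (dxl l x)) = rAct l u (lActVec l y (dxl l x)) := by
        have := congrArg (fun f => f (dxl l x)) (lAct_rAct_comm l y u)
        simpa using this
      have c3 : lActVec l x (lActVec l y m) - lActVec l y (lActVec l x m)
          = lActVec l (gbr l x y) m := by
        have := congrArg (fun f => f m) (lAct_bracket l x y)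
        simpa using this
      have c4 : rAct l u (lActVec l x (dxl l y)) + rAct l u (rAct l (iotaU l y) (dxl l x))
          - (rAct l u (lActVec l y (dxl l x)) + rAct l u (rAct l (iotaU l x) (dxl l y)))
          = rAct l u (dxl l (gbr l x y)) := by
        rw [← map_add, ← map_add, ← map_sub, bracket_dxl]
      rw [c1, c2, LinearMap.comp_apply, LinearMap.comp_apply, ← c3, ← c4]
      abel

/-- There is a unique `ℂ`-linear map `d : U_λ → Ω¹` with `d(1) = 0`,
`d(x₁) = -e₃ ⊗ 1`, `d(x₂) = e₁ ⊗ 1`, `d(x₃) = e₂ ⊗ 1`, satisfying the Leibniz rule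
`d(uv) = u·d(v) + d(u)·v` with respect to the `U_λ`-bimodule structure of `Ω¹`. -/
theorem exists_unique_differential (l : ℂ)
    (Φ : Uenv l →ₐ[ℂ] Module.End ℂ (Om1 l))
    (hΦ : ∀ x : G l, Φ (iotaU l x) = lActVec l x) :
    ∃! d : Uenv l →ₗ[ℂ] Om1 l,
      d 1 = 0 ∧ (∀ a : Fin 3, d (Xgen l a) = dx l a) ∧
      ∀ u v : Uenv l, d (u * v) = Φ u (d v) + rAct l v (d u) := by
  classical
  set ψ : Uenv l →ₐ[ℂ] Module.End ℂ (Uenv l × Om1 l) :=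
    UniversalEnvelopingAlgebra.lift ℂ (fLie l) with hψdef
  have hψι : ∀ x : G l, ψ (iotaU l x) = fE l x := fun x =>
    UniversalEnvelopingAlgebra.lift_ι_apply ℂ (fLie l) x
  have hcomm : ∀ u : Uenv l, ∀ (w : Uenv l) (m : Om1 l),
      Φ u (rAct l w m) = rAct l w (Φ u m) := by
    intro u
    induction u using uenv_induction with
    | halg c =>
      intro w m
      rw [AlgHom.commutes]
      simp [Module.algebraMap_end_apply]
    | hι x =>
      intro w m
      rw [hΦ]
      have := congrArg (fun f => f m) (lAct_rAct_comm l x w)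
      simpa using this
    | hmul a b ha hb =>
      intro w m
      rw [map_mul, Module.End.mul_apply, Module.End.mul_apply, hb, ha]
    | hadd a b ha hb =>
      intro w m
      rw [map_add, LinearMap.add_apply, LinearMap.add_apply, ha, hb, map_add]
  have hA : ∀ u v : Uenv l, ∀ m : Om1 l, (ψ u (v, m)).1 = u * v := by
    intro u
    induction u using uenv_induction with
    | halg c =>
      intro v m
      rw [AlgHom.commutes]
      simp [Module.algebraMap_end_apply, Algebra.smul_def]
    | hι x =>
      intro v m
      rw [hψι, fE_apply]
    | hmul a b ha hb =>
      intro v m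
      rw [map_mul, Module.End.mul_apply, ← Prod.mk.eta (p := ψ b (v, m)), ha, hb, mul_assoc]
    | hadd a b ha hb =>
      intro v m
      rw [map_add, LinearMap.add_apply]
      show (ψ a (v, m) + ψ b (v, m)).1 = _
      rw [Prod.fst_add, ha, hb, add_mul]
  set d0 : Uenv l → Om1 l := fun u => (ψ u ((1 : Uenv l), (0 : Om1 l))).2 with hd0def
  have hB : ∀ u : Uenv l, ∀ (v : Uenv l) (m : Om1 l),
      (ψ u (v, m)).2 = Φ u m + rAct l v (d0 u) := by
    intro u
    induction u using uenv_induction with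
    | halg c =>
      intro v m
      have h1 : d0 (algebraMap ℂ (Uenv l) c) = 0 := by
        show (ψ (algebraMap ℂ (Uenv l) c) ((1 : Uenv l), (0 : Om1 l))).2 = 0
        rw [AlgHom.commutes]
        simp [Module.algebraMap_end_apply]
      rw [h1, AlgHom.commutes, AlgHom.commutes, map_zero, add_zero]
      simp [Module.algebraMap_end_apply]
    | hι x =>
      intro v m
      have h1 : d0 (iotaU l x) = dxl l x := by
        show (ψ (iotaU l x) ((1 : Uenv l), (0 : Om1 l))).2 = dxl l x
        rw [hψι, fE_apply, map_zero, zero_add]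
        rw [rAct_one]
        rfl
      rw [h1, hψι, fE_apply, hΦ]
    | hmul a b ha hb =>
      intro v m
      have hd : d0 (a * b) = Φ a (d0 b) + rAct l b (d0 a) := by
        show (ψ (a * b) ((1 : Uenv l), (0 : Om1 l))).2 = _
        rw [map_mul, Module.End.mul_apply,
          ← Prod.mk.eta (p := ψ b ((1 : Uenv l), (0 : Om1 l))), ha, hA b 1 0, mul_one]
        try rfl
      rw [map_mul, Module.End.mul_apply, ← Prod.mk.eta (p := ψ b (v, m)), ha,
        hb, hA b v m, hd]
      rw [map_add, hcomm a v (d0 b), map_mul Φ a b, Module.End.mul_apply]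
      have hr : rAct l (b * v) (d0 a) = rAct l v (rAct l b (d0 a)) := by
        rw [rAct_mul]; rfl
      rw [hr, map_add]
      abel
    | hadd a b ha hb =>
      intro v m
      have hd : d0 (a + b) = d0 a + d0 b := by
        show (ψ (a + b) ((1 : Uenv l), (0 : Om1 l))).2 = _
        rw [map_add, LinearMap.add_apply, Prod.snd_add]
      rw [map_add, LinearMap.add_apply, Prod.snd_add, ha, hb, hd, map_add, map_add,
        LinearMap.add_apply]
      abel
  set d : Uenv l →ₗ[ℂ] Om1 l :=
    (LinearMap.snd ℂ (Uenv l) (Om1 l)).comp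
      ((LinearMap.applyₗ (((1 : Uenv l), (0 : Om1 l)) : Uenv l × Om1 l)).comp
        ψ.toLinearMap) with hddef
  have hdeq : ∀ u : Uenv l, d u = d0 u := fun u => rfl
  have hd1 : d 1 = 0 := by
    rw [hdeq]
    show (ψ 1 ((1 : Uenv l), (0 : Om1 l))).2 = 0
    rw [map_one]
    rfl
  have hdx : ∀ a : Fin 3, d (Xgen l a) = dx l a := by
    intro a
    rw [hdeq]
    show (ψ (iotaU l (xvec l a)) ((1 : Uenv l), (0 : Om1 l))).2 = dx l a
    rw [hψι, fE_apply, map_zero, zero_add, rAct_one]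
    show dxl l (xvec l a) = dx l a
    exact dxl_xvec l a
  have hleib : ∀ u v : Uenv l, d (u * v) = Φ u (d v) + rAct l v (d u) := by
    intro u v
    rw [hdeq, hdeq, hdeq]
    show (ψ (u * v) ((1 : Uenv l), (0 : Om1 l))).2 = _
    rw [map_mul, Module.End.mul_apply,
      ← Prod.mk.eta (p := ψ v ((1 : Uenv l), (0 : Om1 l))), hB u]
    try rw [hA v 1 0, mul_one]
    try rfl
  refine ⟨d, ⟨hd1, hdx, hleib⟩, ?_⟩
  rintro d' ⟨h1, h2, h3⟩
  apply LinearMap.ext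
  intro u
  induction u using uenv_induction with
  | halg c =>
    rw [Algebra.algebraMap_eq_smul_one, map_smul, map_smul, h1, hd1]
  | hι x =>
    have hx : iotaU l x = x 0 • Xgen l 0 + x 1 • Xgen l 1 + x 2 • Xgen l 2 := by
      conv_lhs => rw [gdecomp l x]
      simp only [map_add, map_smul]
      rfl
    rw [hx, map_add, map_add, map_smul, map_smul, map_smul,
      map_add, map_add, map_smul, map_smul, map_smul, h2 0, h2 1, h2 2, hdx 0, hdx 1, hdx 2]
  | hmul a b ha hb =>
    rw [h3, hleib, ha, hb]
  | hadd a b ha hb =>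
    rw [map_add, map_add, ha, hb]
end
end

section
/- For every λ ∈ ℂ, the maps d, d₁, d₂ form a complex: d₁ ∘ d = 0 as a map U_λ → Λ²ℂ³ ⊗ U_λ, and d₂ ∘ d₁ = 0 as a map ℂ³ ⊗ U_λ → Λ³ℂ³ ⊗ U_λ. -/
set_option synthInstance.maxHeartbeats 1000000
set_option maxHeartbeats 1000000

noncomputable section
open TensorProduct

attribute [local instance] LieRing.ofAssociativeRing LieAlgebra.ofAssociativeAlgebra

abbrev ExtA := ExteriorAlgebra ℂ V3

/-- Wedge of a vector with a vector, landing in `Λ²ℂ³`. -/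
def wedge1 (v : V3) : V3 →ₗ[ℂ] ⋀[ℂ]^2 V3 where
  toFun w := ⟨ExteriorAlgebra.ι ℂ v * ExteriorAlgebra.ι ℂ w, by
    show _ ∈ (LinearMap.range (ExteriorAlgebra.ι ℂ : V3 →ₗ[ℂ] ExtA)) ^ 2
    rw [sq]
    exact Submodule.mul_mem_mul (LinearMap.mem_range_self _ v) (LinearMap.mem_range_self _ w)⟩
  map_add' w₁ w₂ := by ext; simp [mul_add]
  map_smul' c w := by ext; simp [Algebra.mul_smul_comm]

/-- Wedge of a 2-vector with a vector, landing in `Λ³ℂ³`. -/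
def wedge2 (b : ⋀[ℂ]^2 V3) : V3 →ₗ[ℂ] ⋀[ℂ]^3 V3 where
  toFun w := ⟨(b : ExtA) * ExteriorAlgebra.ι ℂ w, by
    show _ ∈ (LinearMap.range (ExteriorAlgebra.ι ℂ : V3 →ₗ[ℂ] ExtA)) ^ 3
    rw [pow_succ]
    exact Submodule.mul_mem_mul b.2 (LinearMap.mem_range_self _ w)⟩
  map_add' w₁ w₂ := by ext; simp [mul_add]
  map_smul' c w := by ext; simp [Algebra.mul_smul_comm]

/-- `Ω² = Λ²ℂ³ ⊗ U_λ`. -/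
abbrev Om2 (l : ℂ) := (⋀[ℂ]^2 V3) ⊗[ℂ] Uenv l

/-- `Ω³ = Λ³ℂ³ ⊗ U_λ`. -/
abbrev Om3 (l : ℂ) := (⋀[ℂ]^3 V3) ⊗[ℂ] Uenv l


-- ===== auxiliary material =====

@[simp] lemma wedge1_coe (v w : V3) :
    ((wedge1 v w : ⋀[ℂ]^2 V3) : ExtA) = ExteriorAlgebra.ι ℂ v * ExteriorAlgebra.ι ℂ w := rfl

lemma wedge1_swap (v w : V3) : wedge1 v w + wedge1 w v = 0 :=
  Subtype.ext (ExteriorAlgebra.ι_add_mul_swap v w)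

lemma wedge1_add_left (v v' w : V3) : wedge1 (v + v') w = wedge1 v w + wedge1 v' w :=
  Subtype.ext (by push_cast [wedge1_coe]; simp [add_mul])

lemma wedge1_smul_left (c : ℂ) (v w : V3) : wedge1 (c • v) w = c • wedge1 v w :=
  Subtype.ext (by push_cast [wedge1_coe]; simp [smul_mul_assoc])

/-- Right wedge: `v ↦ v ∧ w`. -/
def wedgeR (w : V3) : V3 →ₗ[ℂ] ⋀[ℂ]^2 V3 where
  toFun v := wedge1 v w
  map_add' v v' := wedge1_add_left v v' w
  map_smul' c v := wedge1_smul_left c v w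

@[simp] lemma wedgeR_apply (w v : V3) : wedgeR w v = wedge1 v w := rfl

lemma wedgeR_add_wedge1 (w : V3) : wedgeR w + wedge1 w = 0 :=
  LinearMap.ext fun v => wedge1_swap v w

/-- An alternating 2-form from a bilinear map vanishing on the diagonal. -/
def alt2 {N : Type} [AddCommGroup N] [Module ℂ N] (B : V3 →ₗ[ℂ] V3 →ₗ[ℂ] N)
    (hB : ∀ v, B v v = 0) : V3 [⋀^Fin 2]→ₗ[ℂ] N where
  toFun v := B (v 0) (v 1)
  map_update_add' := by
    intro _ m i x y
    fin_cases i <;> simp [Function.update_apply]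
  map_update_smul' := by
    intro _ m i c x
    fin_cases i <;> simp [Function.update_apply]
  map_eq_zero_of_eq' := by
    intro v i j h hne
    fin_cases i <;> fin_cases j <;> simp_all

/-- The bilinear map `(v, w) ↦ ρv ∧ w + v ∧ ρw`. -/
def bilD (ρ : V3 →ₗ[ℂ] V3) : V3 →ₗ[ℂ] V3 →ₗ[ℂ] ⋀[ℂ]^2 V3 :=
  LinearMap.mk₂ ℂ (fun v w => wedge1 (ρ v) w + wedge1 v (ρ w))
    (fun v v' w => by rw [map_add, wedge1_add_left, wedge1_add_left]; abel)
    (fun c v w => by rw [map_smul, wedge1_smul_left, wedge1_smul_left, smul_add])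
    (fun v w w' => by simp only [map_add]; abel)
    (fun c v w => by simp only [map_smul, smul_add])

lemma bilD_diag (ρ : V3 →ₗ[ℂ] V3) (v : V3) : bilD ρ v v = 0 :=
  wedge1_swap (ρ v) v

/-- The derivation extension of `ρ` to `Λ²ℂ³`. -/
def rho2 (ρ : V3 →ₗ[ℂ] V3) : ⋀[ℂ]^2 V3 →ₗ[ℂ] ⋀[ℂ]^2 V3 :=
  (ExteriorAlgebra.liftAlternating (fun i => match i with
    | 2 => alt2 (bilD ρ) (bilD_diag ρ)
    | _ => 0)) ∘ₗ (⋀[ℂ]^2 V3).subtype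

lemma rho2_wedge1 (ρ : V3 →ₗ[ℂ] V3) (v w : V3) :
    rho2 ρ (wedge1 v w) = wedge1 (ρ v) w + wedge1 v (ρ w) := by
  have h : ((wedge1 v w : ⋀[ℂ]^2 V3) : ExtA) = ExteriorAlgebra.ιMulti ℂ 2 ![v, w] := by
    simp [ExteriorAlgebra.ιMulti_succ_apply, ExteriorAlgebra.ιMulti_zero_apply, Matrix.vecTail,
      wedge1_coe]
  show ExteriorAlgebra.liftAlternating _ ((wedge1 v w : ⋀[ℂ]^2 V3) : ExtA) = _
  rw [h, ExteriorAlgebra.liftAlternating_apply_ιMulti]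
  show bilD ρ (![v,w] 0) (![v,w] 1) = _
  simp [bilD]

/-- Left multiplication by `ι v`, from `Λ²` to `Λ³`. -/
def mulV (v : V3) : ⋀[ℂ]^2 V3 →ₗ[ℂ] ⋀[ℂ]^3 V3 where
  toFun b := ⟨ExteriorAlgebra.ι ℂ v * (b : ExtA), by
    show _ ∈ (LinearMap.range (ExteriorAlgebra.ι ℂ : V3 →ₗ[ℂ] ExtA)) ^ (1 + 2)
    rw [pow_add, pow_one]
    exact Submodule.mul_mem_mul (LinearMap.mem_range_self _ v) b.2⟩
  map_add' b b' := by ext; simp [mul_add]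
  map_smul' c b := by ext; simp [Algebra.mul_smul_comm]

lemma wedge2_wedge1 (v w : V3) : wedge2 (wedge1 v w) = (mulV v) ∘ₗ wedge1 w := by
  refine LinearMap.ext fun z => Subtype.ext ?_
  show (ExteriorAlgebra.ι ℂ v * ExteriorAlgebra.ι ℂ w) * ExteriorAlgebra.ι ℂ z
      = ExteriorAlgebra.ι ℂ v * (ExteriorAlgebra.ι ℂ w * ExteriorAlgebra.ι ℂ z)
  exact mul_assoc _ _ _

/-- An induction principle for the universal enveloping algebra. -/
lemma uea_ind {l : ℂ} {C : Uenv l → Prop}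
    (halg : ∀ r : ℂ, C (algebraMap ℂ (Uenv l) r))
    (hi : ∀ x : G l, C (iotaU l x))
    (hmul : ∀ a b, C a → C b → C (a * b))
    (hadd : ∀ a b, C a → C b → C (a + b)) : ∀ u, C u := by
  intro u
  obtain ⟨t, rfl⟩ : ∃ t, UniversalEnvelopingAlgebra.mkAlgHom ℂ (G l) t = u :=
    RingCon.mk'_surjective _ u
  induction t using TensorAlgebra.induction with
  | algebraMap r => rw [AlgHom.commutes]; exact halg r
  | ι x => exact hi x
  | mul a b ha hb => rw [map_mul]; exact hmul _ _ ha hb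
  | add a b ha hb => rw [map_add]; exact hadd _ _ ha hb

/-- `Ω(x) = Σ x_a ω_a`. -/
def Omx (x : V3) : V3 := x 0 • omegaV 0 + x 1 • omegaV 1 + x 2 • omegaV 2

lemma v3_decomp (y : V3) :
    y = y 0 • (Pi.single 0 1 : V3) + y 1 • (Pi.single 1 1 : V3) + y 2 • (Pi.single 2 1 : V3) := by
  funext i
  fin_cases i <;> simp [Pi.single_apply]

lemma xvec_decomp (l : ℂ) (x : G l) :
    x = (x 0 : ℂ) • xvec l 0 + (x 1 : ℂ) • xvec l 1 + (x 2 : ℂ) • xvec l 2 :=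
  v3_decomp x

section Main

variable {l : ℂ} (Φ : Uenv l →ₐ[ℂ] Module.End ℂ (Om1 l))
  (hΦ : ∀ x : G l, Φ (iotaU l x) = lActVec l x)
  (d : Uenv l →ₗ[ℂ] Om1 l)
  (hd1 : d 1 = 0) (hdx : ∀ a : Fin 3, d (Xgen l a) = dx l a)
  (hleib : ∀ u v : Uenv l, d (u * v) = Φ u (d v) + rAct l v (d u))
  (D1 : Om1 l →ₗ[ℂ] Om2 l)
  (hD1 : ∀ (v : V3) (u : Uenv l),
    D1 (v ⊗ₜ[ℂ] u) = LinearMap.rTensor (Uenv l) (wedge1 v) (d u))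

include hdx in
lemma d_iota (x : G l) : d (iotaU l x) = (Omx x) ⊗ₜ[ℂ] (1 : Uenv l) := by
  have hx := xvec_decomp l x
  calc d (iotaU l x) = d (iotaU l ((x 0 : ℂ) • xvec l 0 + (x 1 : ℂ) • xvec l 1
        + (x 2 : ℂ) • xvec l 2)) := by rw [← hx]
    _ = (x 0 : ℂ) • d (Xgen l 0) + (x 1 : ℂ) • d (Xgen l 1) + (x 2 : ℂ) • d (Xgen l 2) := by
        simp [Xgen, map_add, map_smul]
    _ = (Omx x) ⊗ₜ[ℂ] (1 : Uenv l) := by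
        simp [hdx, dx, Omx, TensorProduct.add_tmul, TensorProduct.smul_tmul']

include hΦ hdx hleib hD1 in
lemma lemB (x : G l) (m : Om1 l) :
    D1 (lActVec l x m) =
      (LinearMap.rTensor (Uenv l) (rho2 (Matrix.toLin' (rhoLin l x)))
        + LinearMap.lTensor (⋀[ℂ]^2 V3) (LinearMap.mulLeft ℂ (iotaU l x))) (D1 m)
      + LinearMap.rTensor (Uenv l) (wedgeR (Omx x)) m := by
  induction m using TensorProduct.induction_on with
  | zero => simp
  | add m n hm hn =>
      simp only [map_add, hm, hn]
      abel
  | tmul v u =>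
      set ρ := Matrix.toLin' (rhoLin l x) with hρ
      have hlact : lActVec l x (v ⊗ₜ[ℂ] u) = (ρ v) ⊗ₜ[ℂ] u + v ⊗ₜ[ℂ] (iotaU l x * u) := by
        simp [lActVec, LinearMap.rTensor_tmul, LinearMap.lTensor_tmul, hρ]
      have hdxu : d (iotaU l x * u) = lActVec l x (d u) + (Omx x) ⊗ₜ[ℂ] u := by
        rw [hleib, hΦ, d_iota d hdx]
        congr 1
        simp [rAct, LinearMap.lTensor_tmul]
      rw [hlact, map_add, hD1, hD1, hdxu, map_add]
      have hsplit : LinearMap.rTensor (Uenv l) (wedge1 v) (lActVec l x (d u))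
          = LinearMap.rTensor (Uenv l) (wedge1 v ∘ₗ ρ) (d u)
            + LinearMap.lTensor (⋀[ℂ]^2 V3) (LinearMap.mulLeft ℂ (iotaU l x))
              (LinearMap.rTensor (Uenv l) (wedge1 v) (d u)) := by
        simp only [lActVec, LinearMap.add_apply, map_add]
        congr 1
        · rw [← LinearMap.rTensor_comp_apply]
        · rw [← LinearMap.comp_apply, LinearMap.rTensor_comp_lTensor,
            ← LinearMap.lTensor_comp_rTensor, LinearMap.comp_apply]
      rw [hsplit]
      have hkey : wedge1 (ρ v) + (wedge1 v ∘ₗ ρ)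
          = rho2 ρ ∘ₗ wedge1 v := by
        refine LinearMap.ext fun w => ?_
        rw [LinearMap.add_apply, LinearMap.comp_apply, LinearMap.comp_apply, rho2_wedge1]
      have h1 : LinearMap.rTensor (Uenv l) (wedge1 (ρ v)) (d u)
            + LinearMap.rTensor (Uenv l) (wedge1 v ∘ₗ ρ) (d u)
          = LinearMap.rTensor (Uenv l) (rho2 ρ) (LinearMap.rTensor (Uenv l) (wedge1 v) (d u)) := by
        rw [← LinearMap.rTensor_comp_apply, ← hkey, LinearMap.rTensor_add, LinearMap.add_apply]
      rw [hD1 v u, LinearMap.add_apply, ← h1]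
      simp only [LinearMap.rTensor_tmul, wedgeR_apply]
      abel

include hΦ hdx hleib hD1 in
lemma lemA (x : G l) (u : Uenv l) (hu : D1 (d u) = 0) :
    D1 (d (iotaU l x * u)) = 0 := by
  have hdxu : d (iotaU l x * u) = lActVec l x (d u) + (Omx x) ⊗ₜ[ℂ] u := by
    rw [hleib, hΦ, d_iota d hdx]
    congr 1
    simp [rAct, LinearMap.lTensor_tmul]
  rw [hdxu, map_add, lemB Φ hΦ d hdx hleib D1 hD1, hu, map_zero, zero_add, hD1]
  rw [← LinearMap.add_apply, ← LinearMap.rTensor_add, wedgeR_add_wedge1,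
    LinearMap.rTensor_zero, LinearMap.zero_apply]

end Main

/-- `d`, `d₁`, `d₂` form a complex: `d₁ ∘ d = 0` and `d₂ ∘ d₁ = 0`. -/
theorem differential_complex (l : ℂ)
    (Φ : Uenv l →ₐ[ℂ] Module.End ℂ (Om1 l))
    (hΦ : ∀ x : G l, Φ (iotaU l x) = lActVec l x)
    (d : Uenv l →ₗ[ℂ] Om1 l)
    (hd1 : d 1 = 0) (hdx : ∀ a : Fin 3, d (Xgen l a) = dx l a)
    (hleib : ∀ u v : Uenv l, d (u * v) = Φ u (d v) + rAct l v (d u))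
    (D1 : Om1 l →ₗ[ℂ] Om2 l)
    (hD1 : ∀ (v : V3) (u : Uenv l),
      D1 (v ⊗ₜ[ℂ] u) = LinearMap.rTensor (Uenv l) (wedge1 v) (d u))
    (D2 : Om2 l →ₗ[ℂ] Om3 l)
    (hD2 : ∀ (b : ⋀[ℂ]^2 V3) (u : Uenv l),
      D2 (b ⊗ₜ[ℂ] u) = LinearMap.rTensor (Uenv l) (wedge2 b) (d u)) :
    (∀ u : Uenv l, D1 (d u) = 0) ∧ (∀ w : Om1 l, D2 (D1 w) = 0) := by
  have part1 : ∀ u : Uenv l, D1 (d u) = 0 := by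
    have key : ∀ w : Uenv l, ∀ u : Uenv l, D1 (d u) = 0 → D1 (d (w * u)) = 0 := by
      refine uea_ind ?_ ?_ ?_ ?_
      · intro r u hu
        have h : (algebraMap ℂ (Uenv l) r) * u = r • u := (Algebra.smul_def r u).symm
        rw [h, map_smul, map_smul, hu, smul_zero]
      · intro x u hu
        exact lemA Φ hΦ d hdx hleib D1 hD1 x u hu
      · intro a b ha hb u hu
        rw [mul_assoc]
        exact ha _ (hb _ hu)
      · intro a b ha hb u hu
        rw [add_mul, map_add, map_add, ha _ hu, hb _ hu, add_zero]
    intro u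
    have h1 : D1 (d (1 : Uenv l)) = 0 := by rw [hd1, map_zero]
    have h2 := key u 1 h1
    rwa [mul_one] at h2
  refine ⟨part1, ?_⟩
  have claim2 : ∀ (v : V3) (m : Om1 l),
      D2 (LinearMap.rTensor (Uenv l) (wedge1 v) m)
        = LinearMap.rTensor (Uenv l) (mulV v) (D1 m) := by
    intro v m
    induction m using TensorProduct.induction_on with
    | zero => simp
    | add m n hm hn => simp only [map_add, hm, hn]
    | tmul w u =>
        rw [LinearMap.rTensor_tmul, hD2, hD1, wedge2_wedge1, LinearMap.rTensor_comp_apply]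
  intro w
  induction w using TensorProduct.induction_on with
  | zero => simp
  | add m n hm hn => simp only [map_add, hm, hn, add_zero]
  | tmul v u =>
      rw [hD1, claim2, part1, map_zero]
end
end
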